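/- For interval representations I[a,b] and I[c,d] of an A_n type quiver with any orientation, the dimension of the space of representation morphisms Hom(I[a,b], I[c,d]) as a K-vector space is either 0 or 1. -/

import Mathlib

/-- Indicator of the interval `[a,b]` at vertex `i`, valued in `K`. -/
def ind (K : Type*) [Field K] (a b i : ℕ) : K := if a ≤ i ∧ i ≤ b then 1 else 0

/-- A morphism of representations from the interval representation `I[a,b]` to `I[c,d]` of the
`A_n` type quiver with orientation `τ` (vertices `1,…,n`; for `1 ≤ i < n` the `i`-th arrow
connects vertices `i` and `i+1`, pointing forward `i → i+1` if `τ i = true` and backward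
`i+1 → i` otherwise).  Since every vertex space of an interval representation is `K` or `0`,
such a morphism is a family of scalars `g i` (the map at vertex `i`), vanishing outside
`[a,b] ∩ [c,d]`, commuting with the structure maps of the two interval representations
(whose map along the `i`-th arrow is the identity iff both endpoints lie in the interval,
and zero otherwise). -/
structure IntervalHom (K : Type*) [Field K] (n : ℕ) (τ : ℕ → Bool) (a b c d : ℕ) where
  g : ℕ → K
  supp : ∀ i, ¬(a ≤ i ∧ i ≤ b ∧ c ≤ i ∧ i ≤ d) → g i = 0
  comm : ∀ i, 1 ≤ i → i < n →
    if τ i then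
      ind K c d i * ind K c d (i + 1) * g i = g (i + 1) * (ind K a b i * ind K a b (i + 1))
    else
      ind K c d i * ind K c d (i + 1) * g (i + 1) = g i * (ind K a b i * ind K a b (i + 1))

/-- Any interval hom is constant on the intersection of the two intervals. -/
lemma intervalHom_const (K : Type*) [Field K] (n : ℕ) (τ : ℕ → Bool) (a b c d : ℕ)
    (ha1 : 1 ≤ a) (hbn : b ≤ n)
    (h : IntervalHom K n τ a b c d) :
    ∀ i, max a c ≤ i → i ≤ b → i ≤ d → h.g i = h.g (max a c) := by
  intro i hli
  induction i, hli using Nat.le_induction with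
  | base => intro _ _; rfl
  | succ i hi IH =>
    intro hib hid
    have hia : a ≤ i := le_trans (le_max_left a c) hi
    have hic : c ≤ i := le_trans (le_max_right a c) hi
    have h1 : 1 ≤ i := le_trans ha1 hia
    have hin : i < n := lt_of_lt_of_le (Nat.lt_succ_self i) (le_trans hib hbn)
    have hcomm := h.comm i h1 hin
    have e1 : ind K c d i = 1 := by
      simp [ind, hic, le_trans (Nat.le_succ i) hid]
    have e2 : ind K c d (i + 1) = 1 := by
      simp [ind, le_trans hic (Nat.le_succ i), hid]
    have e3 : ind K a b i = 1 := by
      simp [ind, hia, le_trans (Nat.le_succ i) hib]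
    have e4 : ind K a b (i + 1) = 1 := by
      simp [ind, le_trans hia (Nat.le_succ i), hib]
    rw [e1, e2, e3, e4] at hcomm
    have key : h.g (i + 1) = h.g i := by
      rcases Bool.eq_false_or_eq_true (τ i) with ht | ht <;> simp [ht] at hcomm <;>
        simp [hcomm]
    rw [key, IH (le_trans (Nat.le_succ i) hib) (le_trans (Nat.le_succ i) hid)]

/-- For interval representations `I[a,b]`, `I[c,d]` of an `A_n` type quiver
with any orientation `τ`, the space `Hom(I[a,b], I[c,d])` of representation morphisms has
dimension `0` or `1` over `K`: there is a morphism `g₀` of which every morphism is a scalar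
multiple. -/
theorem intervalHom_dim_le_one (K : Type*) [Field K] (n : ℕ) (τ : ℕ → Bool) (a b c d : ℕ)
    (hab : 1 ≤ a ∧ a ≤ b ∧ b ≤ n) (hcd : 1 ≤ c ∧ c ≤ d ∧ d ≤ n) :
    ∃ g₀ : IntervalHom K n τ a b c d, ∀ h : IntervalHom K n τ a b c d,
      ∃ k : K, ∀ i, h.g i = k * g₀.g i := by
  classical
  obtain ⟨ha1, _, hbn⟩ := hab
  set l := max a c with hl
  have key : ∀ h : IntervalHom K n τ a b c d, ∀ i,
      h.g i = h.g l * ind K l (min b d) i := by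
    intro h i
    by_cases hi : a ≤ i ∧ i ≤ b ∧ c ≤ i ∧ i ≤ d
    · obtain ⟨h1, h2, h3, h4⟩ := hi
      have hconst := intervalHom_const K n τ a b c d ha1 hbn h i (max_le h1 h3) h2 h4
      have : ind K l (min b d) i = 1 := by
        simp [ind, hl, h1, h3, max_le h1 h3, le_min h2 h4]
      rw [this, mul_one, hconst]
    · rw [h.supp i hi]
      have : ind K l (min b d) i = 0 := by
        rw [ind, if_neg]
        rintro ⟨hli, him⟩
        exact hi ⟨le_trans (le_max_left a c) hli, le_trans him (min_le_left b d),
          le_trans (le_max_right a c) hli, le_trans him (min_le_right b d)⟩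
      rw [this, mul_zero]
  by_cases H : ∃ e : IntervalHom K n τ a b c d, e.g l ≠ 0
  · obtain ⟨e, he⟩ := H
    refine ⟨e, fun h => ⟨h.g l / e.g l, fun i => ?_⟩⟩
    rw [key h i, key e i]
    field_simp
  · push_neg at H
    refine ⟨⟨fun _ => 0, fun _ _ => rfl, fun i _ _ => ?_⟩, fun h => ⟨0, fun i => ?_⟩⟩
    · split <;> ring
    · rw [key h i, H h, zero_mul, zero_mul]
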